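/- Let p : E → B be a fibration with the homotopically unique homotopy lifting property: for every topological space Y, every continuous F : Y × [0,1] → B and continuous f : Y → E with p(f(y)) = F(y,0) for all y, if F', G' : Y × [0,1] → E are continuous with p ∘ F' = F, F'(y,0) = f(y), p ∘ G' = F, and G'(y,0) = f(y) for all y, then for every fixed y₀ ∈ Y the maps F' and G' are homotopic relative to the set {y₀} × {0,1}. Then p has the weakly unique path homotopically lifting property (wuphl). -/

import Mathlib

universe u

open scoped unitInterval

/-- `p` has the weakly unique path homotopically lifting property (wuphl). -/
def Wuphl {E B : Type*} [TopologicalSpace E] [TopologicalSpace B] (p : C(E, B)) : Prop :=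
  ∀ α β : C(unitInterval, E), α 0 = β 0 → α 1 = β 1 →
    (p.comp α).HomotopicRel (p.comp β) {0, 1} →
    α.HomotopicRel β {0, 1}

/-- `p` is a (Hurewicz) fibration: it has the homotopy lifting property with respect to
every topological space. -/
def IsFibration {E B : Type*} [TopologicalSpace E] [TopologicalSpace B] (p : C(E, B)) : Prop :=
  ∀ (X : Type u) [TopologicalSpace X] (f : C(X, E)) (F : C(X × unitInterval, B)),
    (∀ x, F (x, 0) = p (f x)) →
    ∃ F' : C(X × unitInterval, E), (∀ z, p (F' z) = F z) ∧ (∀ x, F' (x, 0) = f x)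

instance : ContractibleSpace (unitInterval × unitInterval) :=
  haveI : ContractibleSpace ↥(Set.Icc (0:ℝ) 1 ×ˢ Set.Icc (0:ℝ) 1) :=
    ((convex_Icc (0:ℝ) 1).prod (convex_Icc (0:ℝ) 1)).contractibleSpace
      (Set.Nonempty.prod (Set.nonempty_Icc.2 zero_le_one) (Set.nonempty_Icc.2 zero_le_one))
  ((Homeomorph.Set.prod (Set.Icc (0:ℝ) 1) (Set.Icc (0:ℝ) 1)).symm).contractibleSpace

theorem wuphl_of_homotopically_unique_homotopy_lifting {E B : Type*} [TopologicalSpace E]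
    [TopologicalSpace B] (p : C(E, B)) (hp : IsFibration p)
    (huniq : ∀ (Y : Type u) [TopologicalSpace Y] (F : C(Y × unitInterval, B)) (f : C(Y, E)),
      (∀ y, p (f y) = F (y, 0)) →
      ∀ F' G' : C(Y × unitInterval, E),
        (∀ z, p (F' z) = F z) → (∀ y, F' (y, 0) = f y) →
        (∀ z, p (G' z) = F z) → (∀ y, G' (y, 0) = f y) →
        ∀ y₀ : Y, F'.HomotopicRel G' ({y₀} ×ˢ ({0, 1} : Set unitInterval))) :
    Wuphl p := by
  intro α β h0 h1 hαβ
  obtain ⟨H⟩ := hαβ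
  -- Key: two lifts of the same path with the same start point are homotopic rel {0,1}.
  have key : ∀ γ δ : C(unitInterval, E), (∀ t, p (γ t) = p (δ t)) → γ 0 = δ 0 →
      γ.HomotopicRel δ ({0, 1} : Set unitInterval) := by
    intro γ δ hpγδ hstart
    obtain ⟨Θ⟩ := huniq PUnit.{u+1}
      ⟨fun z => p (γ z.2), p.continuous.comp (γ.continuous.comp continuous_snd)⟩ ⟨fun _ => γ 0, continuous_const⟩
      (fun y => rfl)
      ⟨fun z => γ z.2, γ.continuous.comp continuous_snd⟩ ⟨fun z => δ z.2, δ.continuous.comp continuous_snd⟩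
      (fun z => rfl) (fun y => rfl)
      (fun z => (hpγδ z.2).symm) (fun y => hstart.symm)
      PUnit.unit
    exact ⟨{ toFun := fun z => Θ (z.1, (PUnit.unit, z.2))
             continuous_toFun := Θ.continuous.comp
               (continuous_fst.prodMk (continuous_const.prodMk continuous_snd))
             map_zero_left := fun t => Θ.apply_zero _
             map_one_left := fun t => Θ.apply_one _
             prop' := fun s x hx => Θ.eq_fst s (Set.mem_prod.mpr ⟨rfl, hx⟩) }⟩
  have mem0 : (0 : unitInterval) ∈ ({0, 1} : Set unitInterval) := Or.inl rfl
  have mem1 : (1 : unitInterval) ∈ ({0, 1} : Set unitInterval) := Or.inr rfl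
  -- Lift the homotopy H.
  obtain ⟨K', hK'1, hK'2⟩ := hp (ULift unitInterval)
    ⟨fun x => α x.down, α.continuous.comp continuous_uliftDown⟩
    ⟨fun z => H (z.2, z.1.down), H.continuous.comp (continuous_snd.prodMk (continuous_uliftDown.comp continuous_fst))⟩
    (fun x => H.apply_zero x.down)
  set K : C(unitInterval × unitInterval, E) :=
    ⟨fun z => K' (⟨z.1⟩, z.2), K'.continuous.comp ((continuous_uliftUp.comp continuous_fst).prodMk continuous_snd)⟩ with hKdef
  have hK : ∀ t s : unitInterval, p (K (t, s)) = H (s, t) := fun t s => hK'1 (⟨t⟩, s)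
  have hK0 : ∀ t : unitInterval, K (t, 0) = α t := fun t => hK'2 ⟨t⟩
  -- columns of K over the endpoints
  have hcol0 : ContinuousMap.HomotopicRel
      ⟨fun s => K (0, s), K.continuous.comp (continuous_const.prodMk continuous_id)⟩
      ⟨fun _ => α 0, continuous_const⟩ ({0, 1} : Set unitInterval) := by
    refine key _ _ (fun s => ?_) (hK0 0)
    show p (K (0, s)) = p (α 0)
    rw [hK 0 s, H.eq_fst s mem0]; rfl
  have hcol1 : ContinuousMap.HomotopicRel
      ⟨fun s => K (1, s), K.continuous.comp (continuous_const.prodMk continuous_id)⟩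
      ⟨fun _ => α 1, continuous_const⟩ ({0, 1} : Set unitInterval) := by
    refine key _ _ (fun s => ?_) (hK0 1)
    show p (K (1, s)) = p (α 1)
    rw [hK 1 s, H.eq_fst s mem1]; rfl
  have e0 : K (0, 1) = α 0 := hcol0.some.fst_eq_snd mem1
  have e1 : K (1, 1) = α 1 := hcol1.some.fst_eq_snd mem1
  -- the top of K is homotopic to β rel endpoints
  have htop : ContinuousMap.HomotopicRel
      ⟨fun t => K (t, 1), K.continuous.comp (continuous_id.prodMk continuous_const)⟩
      β ({0, 1} : Set unitInterval) := by
    refine key _ _ (fun t => ?_) (e0.trans h0)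
    show p (K (t, 1)) = p (β t)
    rw [hK t 1]
    exact H.apply_one t
  -- paths
  set A : Path (α 0) (α 1) := { toContinuousMap := α, source' := rfl, target' := rfl } with hA
  set Bp : Path (α 0) (α 1) :=
    { toContinuousMap := β, source' := h0.symm, target' := h1.symm } with hB
  set D : Path (α 0) (α 1) :=
    { toFun := fun t => K (t, 1)
      continuous_toFun := K.continuous.comp (continuous_id.prodMk continuous_const)
      source' := e0, target' := e1 } with hD
  set c₀ : Path (α 0) (α 0) :=
    { toFun := fun s => K (0, s)
      continuous_toFun := K.continuous.comp (continuous_const.prodMk continuous_id)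
      source' := hK0 0, target' := e0 } with hc0
  set c₁ : Path (α 1) (α 1) :=
    { toFun := fun s => K (1, s)
      continuous_toFun := K.continuous.comp (continuous_const.prodMk continuous_id)
      source' := hK0 1, target' := e1 } with hc1
  -- the square paths in I × I
  set u₀ : Path ((0, 0) : unitInterval × unitInterval) (1, 0) :=
    { toFun := fun t => (t, 0), continuous_toFun := continuous_id.prodMk continuous_const
      source' := rfl, target' := rfl } with hu0
  set u₁ : Path ((1, 0) : unitInterval × unitInterval) (1, 1) :=
    { toFun := fun s => (1, s), continuous_toFun := continuous_const.prodMk continuous_id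
      source' := rfl, target' := rfl } with hu1
  set v₀ : Path ((0, 0) : unitInterval × unitInterval) (0, 1) :=
    { toFun := fun s => (0, s), continuous_toFun := continuous_const.prodMk continuous_id
      source' := rfl, target' := rfl } with hv0
  set v₁ : Path ((0, 1) : unitInterval × unitInterval) (1, 1) :=
    { toFun := fun t => (t, 1), continuous_toFun := continuous_id.prodMk continuous_const
      source' := rfl, target' := rfl } with hv1
  have hsq : ((u₀.trans u₁).map K.continuous).Homotopic ((v₀.trans v₁).map K.continuous) :=
    (SimplyConnectedSpace.paths_homotopic _ _).map K
  have ha : α 0 = K ((0 : unitInterval), (0 : unitInterval)) := (hK0 0).symm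
  have hb : α 1 = K ((1 : unitInterval), (1 : unitInterval)) := e1.symm
  have hsq' : (((u₀.trans u₁).map K.continuous).cast ha hb).Homotopic
      (((v₀.trans v₁).map K.continuous).cast ha hb) := hsq
  have claim1 : ((u₀.trans u₁).map K.continuous).cast ha hb = A.trans c₁ := by
    ext t
    simp only [Path.cast_coe, Path.map_coe, Function.comp_apply, Path.trans_apply]
    split_ifs <;> simp only [hu0, hu1, hA, hc1, Path.coe_mk_mk, ContinuousMap.coe_mk, hK0] <;> rfl
  have claim2 : ((v₀.trans v₁).map K.continuous).cast ha hb = c₀.trans D := by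
    ext t
    simp only [Path.cast_coe, Path.map_coe, Function.comp_apply, Path.trans_apply]
    split_ifs <;> simp only [hv0, hv1, hc0, hD, Path.coe_mk_mk, ContinuousMap.coe_mk] <;> rfl
  rw [claim1, claim2] at hsq'
  have hc₀ : c₀.Homotopic (Path.refl (α 0)) := hcol0
  have hc₁ : c₁.Homotopic (Path.refl (α 1)) := hcol1
  have hDB : D.Homotopic Bp := htop
  have step1 : (A.trans c₁).Homotopic A :=
    Path.Homotopic.trans ((Path.Homotopic.refl A).hcomp hc₁) ⟨Path.Homotopy.transRefl A⟩
  have step2 : (c₀.trans D).Homotopic Bp :=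
    Path.Homotopic.trans (hc₀.hcomp hDB) ⟨Path.Homotopy.reflTrans Bp⟩
  have final : A.Homotopic Bp := step1.symm.trans (hsq'.trans step2)
  exact final
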